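/- Let Ω ⊂ ℂ be a bounded open set, h : Ω → ℂ a C¹ map with finite Dirichlet energy, and η a test function on Ω. For all ε in a neighborhood of 0 the map z_ε(ξ) = ξ + ε·η(ξ) is a C∞ diffeomorphism of Ω onto itself with positive Jacobian; set H_ε = h ∘ z_ε⁻¹ and e(ε) = E[H_ε]. Then e is twice differentiable at ε = 0 and its second derivative there equals 8·[ (1/2)·∫_Ω (|h_z|² + |h_z̄|²)·|η_z̄|² dA + Re ∫_Ω h_z·conj(h_z̄)·η_z·η_z̄ dA ]. -/

import Mathlib

open Complex MeasureTheory Set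

/-- Wirtinger derivative `∂f/∂z` via the real Fréchet derivative. -/
noncomputable def wdz (f : ℂ → ℂ) (z : ℂ) : ℂ :=
  (1 / 2 : ℂ) * (fderiv ℝ f z 1 - Complex.I * fderiv ℝ f z Complex.I)

/-- Wirtinger derivative `∂f/∂z̄` via the real Fréchet derivative. -/
noncomputable def wdzbar (f : ℂ → ℂ) (z : ℂ) : ℂ :=
  (1 / 2 : ℂ) * (fderiv ℝ f z 1 + Complex.I * fderiv ℝ f z Complex.I)

/-- Dirichlet energy of `f` on `Ω`. -/
noncomputable def energy (Ω : Set ℂ) (f : ℂ → ℂ) : ℝ :=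
  ∫ z in Ω, ((norm (wdz f z)) ^ 2 + (norm (wdzbar f z)) ^ 2)

/-- A test function on `Ω`: smooth with compact support contained in `Ω`. -/
def IsTestFunction (Ω : Set ℂ) (η : ℂ → ℂ) : Prop :=
  ContDiff ℝ (⊤ : ℕ∞) η ∧ IsCompact (tsupport η) ∧ tsupport η ⊆ Ω

/-- An admissible change of variables of `Ω`: a `C¹` diffeomorphism of `Ω` onto itself
with everywhere positive Jacobian, equal to the identity outside a compact subset of `Ω`. -/
structure IsAdmissibleChange (Ω : Set ℂ) (ξ : ℂ → ℂ) : Prop where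
  contDiffOn : ContDiffOn ℝ 1 ξ Ω
  bijOn : Set.BijOn ξ Ω Ω
  jac_pos : ∀ z ∈ Ω, (norm (wdz ξ z)) ^ 2 - (norm (wdzbar ξ z)) ^ 2 > 0
  eq_id : ∃ K : Set ℂ, IsCompact K ∧ K ⊆ Ω ∧ ∀ z ∉ K, ξ z = z

/-- `h` is Hopf harmonic on `Ω`: `h` is `C¹` and its Hopf product is holomorphic on `Ω`. -/
def IsHopfHarmonic (Ω : Set ℂ) (h : ℂ → ℂ) : Prop :=
  ContDiffOn ℝ 1 h Ω ∧
    DifferentiableOn ℂ (fun z => wdz h z * (starRingEnd ℂ) (wdzbar h z)) Ω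

section WirtingerHelpers

noncomputable def pC (L : ℂ →L[ℝ] ℂ) : ℂ := (1 / 2 : ℂ) * (L 1 - Complex.I * L Complex.I)
noncomputable def qC (L : ℂ →L[ℝ] ℂ) : ℂ := (1 / 2 : ℂ) * (L 1 + Complex.I * L Complex.I)

lemma wdz_eq (f : ℂ → ℂ) (z : ℂ) : wdz f z = pC (fderiv ℝ f z) := rfl
lemma wdzbar_eq (f : ℂ → ℂ) (z : ℂ) : wdzbar f z = qC (fderiv ℝ f z) := rfl

lemma clm_apply_eq (L : ℂ →L[ℝ] ℂ) (v : ℂ) :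
    L v = pC L * v + qC L * (starRingEnd ℂ) v := by
  have h1 : v = v.re • (1 : ℂ) + v.im • Complex.I := by
    simp [Complex.real_smul, Complex.re_add_im]
  have h2 : (starRingEnd ℂ) v = (v.re : ℂ) - (v.im : ℂ) * Complex.I := by
    simp [Complex.ext_iff]
  conv_lhs => rw [h1]
  rw [L.map_add, L.map_smul, L.map_smul, h2]
  simp only [Complex.real_smul, pC, qC]
  linear_combination ((1 / 2 : ℂ) * (L 1 - Complex.I * L Complex.I)) * (Complex.re_add_im v) +
    ((v.im : ℂ) * L Complex.I) * Complex.I_sq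

lemma pC_comp (L M : ℂ →L[ℝ] ℂ) :
    pC (L.comp M) = pC L * pC M + qC L * (starRingEnd ℂ) (qC M) := by
  have hM1 : M 1 = pC M + qC M := by simpa using clm_apply_eq M 1
  have hMI : M Complex.I = pC M * Complex.I + qC M * (-Complex.I) := by
    simpa [Complex.conj_I] using clm_apply_eq M Complex.I
  have h0 : pC (L.comp M) = (1 / 2 : ℂ) * (L (M 1) - Complex.I * L (M Complex.I)) := rfl
  rw [h0, clm_apply_eq L (M 1), clm_apply_eq L (M Complex.I), hM1, hMI]
  simp only [map_add, map_mul, map_neg, Complex.conj_I, Complex.conj_conj]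
  ring_nf
  simp only [Complex.I_sq]
  ring

lemma qC_comp (L M : ℂ →L[ℝ] ℂ) :
    qC (L.comp M) = pC L * qC M + qC L * (starRingEnd ℂ) (pC M) := by
  have hM1 : M 1 = pC M + qC M := by simpa using clm_apply_eq M 1
  have hMI : M Complex.I = pC M * Complex.I + qC M * (-Complex.I) := by
    simpa [Complex.conj_I] using clm_apply_eq M Complex.I
  have h0 : qC (L.comp M) = (1 / 2 : ℂ) * (L (M 1) + Complex.I * L (M Complex.I)) := rfl
  rw [h0, clm_apply_eq L (M 1), clm_apply_eq L (M Complex.I), hM1, hMI]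
  simp only [map_add, map_mul, map_neg, Complex.conj_I, Complex.conj_conj]
  ring_nf
  simp only [Complex.I_sq]
  ring

lemma pC_id : pC (ContinuousLinearMap.id ℝ ℂ) = 1 := by
  simp [pC]; norm_num

lemma qC_id : qC (ContinuousLinearMap.id ℝ ℂ) = 0 := by
  simp [qC]

lemma det_eq (L : ℂ →L[ℝ] ℂ) :
    L.det = Complex.normSq (pC L) - Complex.normSq (qC L) := by
  rw [ContinuousLinearMap.det, ← LinearMap.det_toMatrix Complex.basisOneI]
  rw [Matrix.det_fin_two]
  simp only [LinearMap.toMatrix_apply, Complex.coe_basisOneI_repr, Complex.coe_basisOneI]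
  simp only [pC, qC, Complex.normSq_apply]
  simp [Complex.mul_re, Complex.mul_im]
  ring

lemma normSq_jac (a b : ℂ) (ε : ℝ) :
    Complex.normSq (1 + (ε:ℂ) * a) - Complex.normSq ((ε:ℂ) * b)
      = 1 + (2 * a.re) * ε + (Complex.normSq a - Complex.normSq b) * ε ^ 2 := by
  simp only [Complex.normSq_apply, Complex.add_re, Complex.add_im, Complex.mul_re,
    Complex.mul_im, Complex.one_re, Complex.one_im, Complex.ofReal_re, Complex.ofReal_im]
  ring

lemma normSq_real_mul (ε : ℝ) (b : ℂ) :
    Complex.normSq ((ε:ℂ) * b) = ε ^ 2 * Complex.normSq b := by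
  rw [Complex.normSq_mul, Complex.normSq_ofReal]; ring

lemma density_identity (P Q a b : ℂ) (ε J : ℝ)
    (hJ : J = 1 + (2 * a.re) * ε + (Complex.normSq a - Complex.normSq b) * ε ^ 2)
    (hJne : J ≠ 0) :
    J * (Complex.normSq ((P * (starRingEnd ℂ) (1 + (ε:ℂ) * a)
            - Q * (starRingEnd ℂ) ((ε:ℂ) * b)) / (J:ℂ))
        + Complex.normSq ((Q * (1 + (ε:ℂ) * a) - P * ((ε:ℂ) * b)) / (J:ℂ)))
      = (Complex.normSq P + Complex.normSq Q) +
        ((-4 * (P * (starRingEnd ℂ) Q * b).re) * ε +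
          (2 * (Complex.normSq P + Complex.normSq Q) * Complex.normSq b
            - 4 * (P * (starRingEnd ℂ) Q * (starRingEnd ℂ) a * b).re) * ε ^ 2) / J := by
  rw [Complex.normSq_div, Complex.normSq_div, Complex.normSq_ofReal]
  field_simp
  subst hJ
  simp only [Complex.normSq_apply, Complex.sub_re, Complex.sub_im, Complex.add_re,
    Complex.add_im, Complex.mul_re, Complex.mul_im, Complex.one_re, Complex.one_im,
    Complex.ofReal_re, Complex.ofReal_im, Complex.conj_re, Complex.conj_im]
  ring

end WirtingerHelpers

section PsiHelpers

noncomputable def SS (h : ℂ → ℂ) (w : ℂ) : ℝ :=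
  Complex.normSq (wdz h w) + Complex.normSq (wdzbar h w)
noncomputable def AA (h η : ℂ → ℂ) (w : ℂ) : ℝ :=
  -4 * (wdz h w * (starRingEnd ℂ) (wdzbar h w) * wdzbar η w).re
noncomputable def BB (h η : ℂ → ℂ) (w : ℂ) : ℝ :=
  2 * SS h w * Complex.normSq (wdzbar η w) -
    4 * (wdz h w * (starRingEnd ℂ) (wdzbar h w) * (starRingEnd ℂ) (wdz η w) * wdzbar η w).re
noncomputable def cc (η : ℂ → ℂ) (w : ℂ) : ℝ := 2 * (wdz η w).re
noncomputable def dd (η : ℂ → ℂ) (w : ℂ) : ℝ :=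
  Complex.normSq (wdz η w) - Complex.normSq (wdzbar η w)
noncomputable def DD (η : ℂ → ℂ) (ε : ℝ) (w : ℂ) : ℝ := 1 + cc η w * ε + dd η w * ε ^ 2
noncomputable def psi (h η : ℂ → ℂ) (ε : ℝ) (w : ℂ) : ℝ :=
  (AA h η w * ε + BB h η w * ε ^ 2) / DD η ε w
noncomputable def psi1 (h η : ℂ → ℂ) (ε : ℝ) (w : ℂ) : ℝ :=
  ((AA h η w + 2 * BB h η w * ε) * DD η ε w -
    (AA h η w * ε + BB h η w * ε ^ 2) * (cc η w + 2 * dd η w * ε)) / DD η ε w ^ 2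
noncomputable def psi2 (h η : ℂ → ℂ) (ε : ℝ) (w : ℂ) : ℝ :=
  ((2 * BB h η w * DD η ε w - 2 * dd η w * (AA h η w * ε + BB h η w * ε ^ 2)) * DD η ε w -
    2 * ((AA h η w + 2 * BB h η w * ε) * DD η ε w -
      (AA h η w * ε + BB h η w * ε ^ 2) * (cc η w + 2 * dd η w * ε)) *
      (cc η w + 2 * dd η w * ε)) / DD η ε w ^ 3

lemma hasDerivAt_DD (η : ℂ → ℂ) (ε : ℝ) (w : ℂ) :
    HasDerivAt (fun t => DD η t w) (cc η w + 2 * dd η w * ε) ε := by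
  have h1 : HasDerivAt (fun t : ℝ => 1 + cc η w * t + dd η w * t ^ 2)
      (0 + cc η w * 1 + dd η w * (2 * ε ^ 1)) ε :=
    (((hasDerivAt_const ε (1:ℝ)).add ((hasDerivAt_id ε).const_mul (cc η w))).add
      ((hasDerivAt_pow 2 ε).const_mul (dd η w)))
  simpa [DD] using h1.congr_deriv (by ring)

lemma hasDerivAt_num (h η : ℂ → ℂ) (ε : ℝ) (w : ℂ) :
    HasDerivAt (fun t => AA h η w * t + BB h η w * t ^ 2)
      (AA h η w + 2 * BB h η w * ε) ε := by
  have h1 : HasDerivAt (fun t : ℝ => AA h η w * t + BB h η w * t ^ 2)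
      (AA h η w * 1 + BB h η w * (2 * ε ^ 1)) ε :=
    ((hasDerivAt_id ε).const_mul (AA h η w)).add ((hasDerivAt_pow 2 ε).const_mul (BB h η w))
  exact h1.congr_deriv (by ring)

lemma hasDerivAt_psi (h η : ℂ → ℂ) (ε : ℝ) (w : ℂ) (hD : DD η ε w ≠ 0) :
    HasDerivAt (fun t => psi h η t w) (psi1 h η ε w) ε := by
  have hd := (hasDerivAt_num h η ε w).div (hasDerivAt_DD η ε w) hD
  exact hd

lemma hasDerivAt_psi1 (h η : ℂ → ℂ) (ε : ℝ) (w : ℂ) (hD : DD η ε w ≠ 0) :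
    HasDerivAt (fun t => psi1 h η t w) (psi2 h η ε w) ε := by
  have hU : HasDerivAt (fun t => (AA h η w + 2 * BB h η w * t) * DD η t w -
      (AA h η w * t + BB h η w * t ^ 2) * (cc η w + 2 * dd η w * t))
      ((2 * BB h η w) * DD η ε w + (AA h η w + 2 * BB h η w * ε) * (cc η w + 2 * dd η w * ε)
        - ((AA h η w + 2 * BB h η w * ε) * (cc η w + 2 * dd η w * ε)
           + (AA h η w * ε + BB h η w * ε ^ 2) * (2 * dd η w))) ε := by
    have h1 : HasDerivAt (fun t : ℝ => AA h η w + 2 * BB h η w * t) (2 * BB h η w) ε := by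
      simpa using ((hasDerivAt_id ε).const_mul (2 * BB h η w)).const_add (AA h η w)
    have h2 : HasDerivAt (fun t : ℝ => cc η w + 2 * dd η w * t) (2 * dd η w) ε := by
      simpa using ((hasDerivAt_id ε).const_mul (2 * dd η w)).const_add (cc η w)
    exact (h1.mul (hasDerivAt_DD η ε w)).sub ((hasDerivAt_num h η ε w).mul h2)
  have hV : HasDerivAt (fun t => DD η t w ^ 2)
      (2 * DD η ε w ^ 1 * (cc η w + 2 * dd η w * ε)) ε := (hasDerivAt_DD η ε w).pow 2
  have hD2 : DD η ε w ^ 2 ≠ 0 := pow_ne_zero _ hD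
  have hdd := hU.div hV hD2
  have heq : psi1 h η = fun t w' => ((AA h η w' + 2 * BB h η w' * t) * DD η t w' -
      (AA h η w' * t + BB h η w' * t ^ 2) * (cc η w' + 2 * dd η w' * t)) / DD η t w' ^ 2 := rfl
  rw [heq]
  refine hdd.congr_deriv ?_
  rw [psi2]
  field_simp
  ring

lemma psi2_zero (h η : ℂ → ℂ) (w : ℂ) :
    psi2 h η 0 w = 4 * (SS h w * Complex.normSq (wdzbar η w)) +
      8 * (wdz h w * (starRingEnd ℂ) (wdzbar h w) * wdz η w * wdzbar η w).re := by
  have h0 : psi2 h η 0 w = 2 * BB h η w - 2 * AA h η w * cc η w := by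
    simp [psi2, DD]
  rw [h0, AA, BB, cc]
  simp only [Complex.mul_re, Complex.mul_im, Complex.conj_re, Complex.conj_im,
    Complex.normSq_apply]
  ring

lemma wdz_zero_of_nmem {η : ℂ → ℂ} {w : ℂ} (hw : w ∉ tsupport η) :
    wdz η w = 0 ∧ wdzbar η w = 0 := by
  have hev : η =ᶠ[nhds w] (fun _ => (0:ℂ)) := by
    have hop : IsOpen (tsupport η)ᶜ := (isClosed_tsupport η).isOpen_compl
    filter_upwards [hop.mem_nhds hw] with x hx
    exact image_eq_zero_of_notMem_tsupport hx
  have h0 : fderiv ℝ η w = fderiv ℝ (fun _ => (0:ℂ)) w := hev.fderiv_eq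
  rw [wdz, wdzbar, h0, fderiv_fun_const]
  simp

lemma measurable_wdz (f : ℂ → ℂ) : Measurable (wdz f) := by
  have h1 := measurable_fderiv_apply_const ℝ f (1 : ℂ)
  have h2 := measurable_fderiv_apply_const ℝ f Complex.I
  exact ((h1.sub (h2.const_mul Complex.I)).const_mul _)

lemma measurable_wdzbar (f : ℂ → ℂ) : Measurable (wdzbar f) := by
  have h1 := measurable_fderiv_apply_const ℝ f (1 : ℂ)
  have h2 := measurable_fderiv_apply_const ℝ f Complex.I
  exact ((h1.add (h2.const_mul Complex.I)).const_mul _)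

lemma continuousOn_wdz {f : ℂ → ℂ} {Ω : Set ℂ} (hΩ : IsOpen Ω)
    (hf : ContDiffOn ℝ 1 f Ω) : ContinuousOn (wdz f) Ω := by
  have hc : ContinuousOn (fderiv ℝ f) Ω := hf.continuousOn_fderiv_of_isOpen hΩ le_rfl
  have h1 : ContinuousOn (fun z => fderiv ℝ f z 1) Ω :=
    (ContinuousLinearMap.apply ℝ ℂ (1:ℂ)).continuous.comp_continuousOn hc
  have h2 : ContinuousOn (fun z => fderiv ℝ f z Complex.I) Ω :=
    (ContinuousLinearMap.apply ℝ ℂ Complex.I).continuous.comp_continuousOn hc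
  exact (continuousOn_const.mul (h1.sub (continuousOn_const.mul h2)))

lemma continuousOn_wdzbar {f : ℂ → ℂ} {Ω : Set ℂ} (hΩ : IsOpen Ω)
    (hf : ContDiffOn ℝ 1 f Ω) : ContinuousOn (wdzbar f) Ω := by
  have hc : ContinuousOn (fderiv ℝ f) Ω := hf.continuousOn_fderiv_of_isOpen hΩ le_rfl
  have h1 : ContinuousOn (fun z => fderiv ℝ f z 1) Ω :=
    (ContinuousLinearMap.apply ℝ ℂ (1:ℂ)).continuous.comp_continuousOn hc
  have h2 : ContinuousOn (fun z => fderiv ℝ f z Complex.I) Ω :=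
    (ContinuousLinearMap.apply ℝ ℂ Complex.I).continuous.comp_continuousOn hc
  exact (continuousOn_const.mul (h1.add (continuousOn_const.mul h2)))

lemma continuous_wdz_of_contDiff {f : ℂ → ℂ} (hf : ContDiff ℝ (⊤ : ℕ∞) f) :
    Continuous (wdz f) := by
  have hc : Continuous (fderiv ℝ f) := hf.continuous_fderiv (by simp)
  have h1 : Continuous (fun z => fderiv ℝ f z 1) :=
    (ContinuousLinearMap.apply ℝ ℂ (1:ℂ)).continuous.comp hc
  have h2 : Continuous (fun z => fderiv ℝ f z Complex.I) :=
    (ContinuousLinearMap.apply ℝ ℂ Complex.I).continuous.comp hc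
  exact (continuous_const.mul (h1.sub (continuous_const.mul h2)))

lemma continuous_wdzbar_of_contDiff {f : ℂ → ℂ} (hf : ContDiff ℝ (⊤ : ℕ∞) f) :
    Continuous (wdzbar f) := by
  have hc : Continuous (fderiv ℝ f) := hf.continuous_fderiv (by simp)
  have h1 : Continuous (fun z => fderiv ℝ f z 1) :=
    (ContinuousLinearMap.apply ℝ ℂ (1:ℂ)).continuous.comp hc
  have h2 : Continuous (fun z => fderiv ℝ f z Complex.I) :=
    (ContinuousLinearMap.apply ℝ ℂ Complex.I).continuous.comp hc
  exact (continuous_const.mul (h1.add (continuous_const.mul h2)))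

lemma integrableOn_of_support_compact {F : ℂ → ℝ} {K Ω : Set ℂ}
    (hKc : IsCompact K) (hFm : Measurable F) (hF0 : ∀ w, w ∉ K → F w = 0)
    (hFc : ContinuousOn F K) : IntegrableOn F Ω volume := by
  obtain ⟨C, hC⟩ := hKc.exists_bound_of_continuousOn hFc
  have hbd : ∀ w, ‖F w‖ ≤ K.indicator (fun _ => max C 0) w := by
    intro w
    by_cases hw : w ∈ K
    · rw [Set.indicator_of_mem hw]
      exact (hC w hw).trans (le_max_left _ _)
    · rw [Set.indicator_of_notMem hw, hF0 w hw]
      simp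
  have hKi : Integrable (K.indicator fun _ => max C 0) volume := by
    rw [integrable_indicator_iff hKc.measurableSet]
    exact integrableOn_const hKc.measure_lt_top.ne
  exact (hKi.mono' hFm.aestronglyMeasurable (ae_of_all _ hbd)).integrableOn

end PsiHelpers

set_option maxHeartbeats 1000000 in
/-- The second inner variation of the Dirichlet energy at `ε = 0`. -/
theorem stmt_5 (Ω : Set ℂ) (hΩo : IsOpen Ω) (hΩb : Bornology.IsBounded Ω)
    (h : ℂ → ℂ) (hh : ContDiffOn ℝ 1 h Ω)
    (hfin : IntegrableOn
      (fun z => (norm (wdz h z)) ^ 2 + (norm (wdzbar h z)) ^ 2) Ω volume)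
    (η : ℂ → ℂ) (hη : IsTestFunction Ω η)
    (ε₀ : ℝ) (hε₀ : 0 < ε₀)
    (g : ℝ → ℂ → ℂ)
    (hbij : ∀ ε : ℝ, |ε| < ε₀ → Set.BijOn (fun w => w + (ε : ℂ) * η w) Ω Ω)
    (hjac : ∀ ε : ℝ, |ε| < ε₀ → ∀ w ∈ Ω,
      (norm (1 + (ε : ℂ) * wdz η w)) ^ 2 - ε ^ 2 * (norm (wdzbar η w)) ^ 2 > 0)
    (hgsmooth : ∀ ε : ℝ, |ε| < ε₀ → ContDiffOn ℝ (⊤ : ℕ∞) (g ε) Ω)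
    (hgl : ∀ ε : ℝ, |ε| < ε₀ → ∀ w ∈ Ω, g ε (w + (ε : ℂ) * η w) = w)
    (hgr : ∀ ε : ℝ, |ε| < ε₀ → ∀ w ∈ Ω, g ε w + (ε : ℂ) * η (g ε w) = w)
    (e : ℝ → ℝ) (he : ∀ ε : ℝ, e ε = energy Ω (h ∘ g ε)) :
    (∀ᶠ ε in nhds (0 : ℝ), DifferentiableAt ℝ e ε) ∧
    HasDerivAt (deriv e)
      (8 * ((1 / 2) * (∫ z in Ω,
          ((norm (wdz h z)) ^ 2 + (norm (wdzbar h z)) ^ 2) *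
            (norm (wdzbar η z)) ^ 2)
        + (∫ z in Ω,
            wdz h z * (starRingEnd ℂ) (wdzbar h z) * wdz η z * wdzbar η z).re)) 0 := by
    classical
  obtain ⟨hηsm, hKc, hKΩ⟩ := hη
  set K := tsupport η with hKdef
  -- continuity and measurability of the building blocks
  have hηwdz_c : Continuous (wdz η) := continuous_wdz_of_contDiff hηsm
  have hηwdzbar_c : Continuous (wdzbar η) := continuous_wdzbar_of_contDiff hηsm
  have hm_wdzh : Measurable (wdz h) := measurable_wdz h
  have hm_wdzbarh : Measurable (wdzbar h) := measurable_wdzbar h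
  have hm_SS : Measurable (SS h) :=
    ((Complex.continuous_normSq.measurable).comp hm_wdzh).add
      ((Complex.continuous_normSq.measurable).comp hm_wdzbarh)
  have hm_T : Measurable (fun w => wdz h w * (starRingEnd ℂ) (wdzbar h w)) :=
    hm_wdzh.mul ((Complex.continuous_conj.measurable).comp hm_wdzbarh)
  have hm_AA : Measurable (AA h η) := by
    unfold AA
    exact (Complex.measurable_re.comp (hm_T.mul hηwdzbar_c.measurable)).const_mul (-4)
  have hm_BB : Measurable (BB h η) := by
    unfold BB
    refine Measurable.sub ?_ ?_
    · exact (hm_SS.const_mul 2).mul ((Complex.continuous_normSq.measurable).comp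
        hηwdzbar_c.measurable)
    · exact (Complex.measurable_re.comp
        ((hm_T.mul ((Complex.continuous_conj.measurable).comp hηwdz_c.measurable)).mul
          hηwdzbar_c.measurable)).const_mul 4
  have hm_cc : Measurable (cc η) := (Complex.measurable_re.comp hηwdz_c.measurable).const_mul 2
  have hm_dd : Measurable (dd η) :=
    ((Complex.continuous_normSq.measurable).comp hηwdz_c.measurable).sub
      ((Complex.continuous_normSq.measurable).comp hηwdzbar_c.measurable)
  have hm_DD : ∀ ε : ℝ, Measurable (DD η ε) := fun ε =>
    (measurable_const.add (hm_cc.mul_const ε)).add (hm_dd.mul_const (ε ^ 2))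
  have hm_num : ∀ ε : ℝ, Measurable (fun w => AA h η w * ε + BB h η w * ε ^ 2) := fun ε =>
    (hm_AA.mul_const ε).add (hm_BB.mul_const (ε ^ 2))
  have hm_l : ∀ ε : ℝ, Measurable (fun w => cc η w + 2 * dd η w * ε) := fun ε =>
    hm_cc.add ((hm_dd.const_mul 2).mul_const ε)
  have hm_psi : ∀ ε : ℝ, Measurable (psi h η ε) := fun ε => (hm_num ε).div (hm_DD ε)
  have hm_p1num : ∀ ε : ℝ, Measurable (fun w =>
      (AA h η w + 2 * BB h η w * ε) * DD η ε w -
        (AA h η w * ε + BB h η w * ε ^ 2) * (cc η w + 2 * dd η w * ε)) := fun ε =>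
    ((hm_AA.add ((hm_BB.const_mul 2).mul_const ε)).mul (hm_DD ε)).sub
      ((hm_num ε).mul (hm_l ε))
  have hm_psi1 : ∀ ε : ℝ, Measurable (psi1 h η ε) := fun ε =>
    (hm_p1num ε).div ((hm_DD ε).pow_const 2)
  have hm_psi2 : ∀ ε : ℝ, Measurable (psi2 h η ε) := fun ε =>
    (((((hm_BB.const_mul 2).mul (hm_DD ε)).sub
        ((hm_dd.const_mul 2).mul (hm_num ε))).mul (hm_DD ε)).sub
      (((hm_p1num ε).const_mul 2).mul (hm_l ε))).div ((hm_DD ε).pow_const 3)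
  -- vanishing off K
  have hcoef0 : ∀ w, w ∉ K → AA h η w = 0 ∧ BB h η w = 0 ∧ cc η w = 0 ∧ dd η w = 0 := by
    intro w hw
    obtain ⟨h1, h2⟩ := wdz_zero_of_nmem hw
    refine ⟨?_, ?_, ?_, ?_⟩ <;> simp [AA, BB, cc, dd, h1, h2]
  have hpsi_zero : ∀ (ε : ℝ) w, w ∉ K → psi h η ε w = 0 := by
    intro ε w hw
    obtain ⟨h1, h2, _, _⟩ := hcoef0 w hw
    simp [psi, h1, h2]
  have hpsi1_zero : ∀ (ε : ℝ) w, w ∉ K → psi1 h η ε w = 0 := by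
    intro ε w hw
    obtain ⟨h1, h2, _, _⟩ := hcoef0 w hw
    simp [psi1, h1, h2]
  -- positivity of the Jacobian
  have hjac' : ∀ ε : ℝ, |ε| < ε₀ → ∀ w ∈ Ω, 0 < DD η ε w := by
    intro ε hε w hw
    have hx := hjac ε hε w hw
    have h2 : DD η ε w = norm (1 + (ε:ℂ) * wdz η w) ^ 2
        - ε ^ 2 * norm (wdzbar η w) ^ 2 := by
      rw [DD, cc, dd, ← normSq_jac, Complex.sq_norm, Complex.sq_norm, normSq_real_mul]
    rw [h2]
    exact hx
  have hDD_ne : ∀ ε : ℝ, |ε| < ε₀ → ∀ w, DD η ε w ≠ 0 := by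
    intro ε hε w
    by_cases hw : w ∈ Ω
    · exact (hjac' ε hε w hw).ne'
    · have hwK : w ∉ K := fun hk => hw (hKΩ hk)
      obtain ⟨_, _, h3, h4⟩ := hcoef0 w hwK
      simp [DD, h3, h4]
  -- continuity on Ω
  have hc_wdzh : ContinuousOn (wdz h) Ω := continuousOn_wdz hΩo hh
  have hc_wdzbarh : ContinuousOn (wdzbar h) Ω := continuousOn_wdzbar hΩo hh
  have hc_SS : ContinuousOn (SS h) Ω :=
    (Complex.continuous_normSq.comp_continuousOn hc_wdzh).add
      (Complex.continuous_normSq.comp_continuousOn hc_wdzbarh)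
  have hc_T : ContinuousOn (fun w => wdz h w * (starRingEnd ℂ) (wdzbar h w)) Ω :=
    hc_wdzh.mul (Complex.continuous_conj.comp_continuousOn hc_wdzbarh)
  have hc_AA : ContinuousOn (AA h η) Ω := by
    unfold AA
    exact continuousOn_const.mul
      (Complex.continuous_re.comp_continuousOn (hc_T.mul hηwdzbar_c.continuousOn))
  have hc_BB : ContinuousOn (BB h η) Ω := by
    unfold BB
    refine ContinuousOn.sub ?_ ?_
    · exact (continuousOn_const.mul hc_SS).mul
        ((Complex.continuous_normSq.comp hηwdzbar_c).continuousOn)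
    · exact continuousOn_const.mul (Complex.continuous_re.comp_continuousOn
        ((hc_T.mul ((Complex.continuous_conj.comp hηwdz_c).continuousOn)).mul
          hηwdzbar_c.continuousOn))
  have hcont_cc : Continuous (cc η) :=
    continuous_const.mul (Complex.continuous_re.comp hηwdz_c)
  have hcont_dd : Continuous (dd η) :=
    (Complex.continuous_normSq.comp hηwdz_c).sub (Complex.continuous_normSq.comp hηwdzbar_c)
  have hcont_DD : ∀ ε : ℝ, Continuous (DD η ε) := fun ε =>
    (continuous_const.add (hcont_cc.mul continuous_const)).add
      ((hcont_dd.mul continuous_const))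
  -- per-ε integrability of psi
  have hpsi_int : ∀ ε : ℝ, |ε| < ε₀ → IntegrableOn (psi h η ε) Ω volume := by
    intro ε hε
    refine integrableOn_of_support_compact hKc (hm_psi ε) (hpsi_zero ε) ?_
    have hnum : ContinuousOn (fun w => AA h η w * ε + BB h η w * ε ^ 2) K :=
      (((hc_AA.mono hKΩ).mul continuousOn_const).add
        ((hc_BB.mono hKΩ).mul continuousOn_const))
    exact hnum.div ((hcont_DD ε).continuousOn) (fun w _ => hDD_ne ε hε w)
  -- SS integrable
  have hSS_int : IntegrableOn (SS h) Ω volume := by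
    have hfun : (fun z => norm (wdz h z) ^ 2 + norm (wdzbar h z) ^ 2) = SS h := by
      funext z
      rw [SS, Complex.sq_norm, Complex.sq_norm]
    rwa [hfun] at hfin
  -- change of variables
  have heps : ∀ ε : ℝ, |ε| < ε₀ →
      energy Ω (h ∘ g ε) = (∫ w in Ω, SS h w) + ∫ w in Ω, psi h η ε w := by
    intro ε hε
    have hηd : Differentiable ℝ η := hηsm.differentiable (by simp)
    have hf'at : ∀ w, HasFDerivAt (fun w => w + (ε:ℂ) * η w)
        (ContinuousLinearMap.id ℝ ℂ + (ε:ℂ) • fderiv ℝ η w) w := fun w =>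
      (hasFDerivAt_id w).add ((hηd w).hasFDerivAt.const_mul (ε:ℂ))
    have hpf : ∀ w, pC (ContinuousLinearMap.id ℝ ℂ + (ε:ℂ) • fderiv ℝ η w)
        = 1 + (ε:ℂ) * wdz η w := by
      intro w
      simp only [pC, wdz, ContinuousLinearMap.add_apply, ContinuousLinearMap.coe_smul',
        Pi.smul_apply, ContinuousLinearMap.id_apply, smul_eq_mul]
      ring_nf
      simp only [Complex.I_sq]
      ring
    have hqf : ∀ w, qC (ContinuousLinearMap.id ℝ ℂ + (ε:ℂ) • fderiv ℝ η w)
        = (ε:ℂ) * wdzbar η w := by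
      intro w
      simp only [qC, wdzbar, ContinuousLinearMap.add_apply, ContinuousLinearMap.coe_smul',
        Pi.smul_apply, ContinuousLinearMap.id_apply, smul_eq_mul]
      ring_nf
      simp only [Complex.I_sq]
      ring
    have hdet_eq : ∀ w, (ContinuousLinearMap.id ℝ ℂ + (ε:ℂ) • fderiv ℝ η w).det
        = DD η ε w := by
      intro w
      rw [det_eq, hpf w, hqf w, DD, cc, dd, ← normSq_jac]
    have hpoint : ∀ w ∈ Ω,
        |(ContinuousLinearMap.id ℝ ℂ + (ε:ℂ) • fderiv ℝ η w).det| •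
          (Complex.normSq (wdz (h ∘ g ε) (w + (ε:ℂ) * η w))
            + Complex.normSq (wdzbar (h ∘ g ε) (w + (ε:ℂ) * η w)))
          = SS h w + psi h η ε w := by
      intro w hw
      have hz : w + (ε:ℂ) * η w ∈ Ω := (hbij ε hε).mapsTo hw
      have hgz : g ε (w + (ε:ℂ) * η w) = w := hgl ε hε w hw
      have hgd : DifferentiableAt ℝ (g ε) (w + (ε:ℂ) * η w) :=
        (((hgsmooth ε hε).contDiffAt (hΩo.mem_nhds hz)).differentiableAt
          (by simp))
      have hhd : DifferentiableAt ℝ h w :=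
        ((hh.contDiffAt (hΩo.mem_nhds hw)).differentiableAt one_ne_zero)
      have hcomp : fderiv ℝ (h ∘ g ε) (w + (ε:ℂ) * η w)
          = (fderiv ℝ h w).comp (fderiv ℝ (g ε) (w + (ε:ℂ) * η w)) := by
        rw [fderiv_comp _ (by rw [hgz]; exact hhd) hgd, hgz]
      have hgf : (fun w' => g ε (w' + (ε:ℂ) * η w')) =ᶠ[nhds w] id := by
        filter_upwards [hΩo.mem_nhds hw] with x hx
        exact hgl ε hε x hx
      have hidd : (fderiv ℝ (g ε) (w + (ε:ℂ) * η w)).comp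
          (ContinuousLinearMap.id ℝ ℂ + (ε:ℂ) • fderiv ℝ η w) = ContinuousLinearMap.id ℝ ℂ := by
        have h1 : fderiv ℝ ((g ε) ∘ (fun w' => w' + (ε:ℂ) * η w')) w
            = (fderiv ℝ (g ε) (w + (ε:ℂ) * η w)).comp
                (fderiv ℝ (fun w' => w' + (ε:ℂ) * η w') w) :=
          fderiv_comp w hgd (hf'at w).differentiableAt
        rw [(hf'at w).fderiv] at h1
        rw [← h1]
        have h2 : fderiv ℝ ((g ε) ∘ fun w' => w' + (ε:ℂ) * η w') w
            = fderiv ℝ (id : ℂ → ℂ) w := Filter.EventuallyEq.fderiv_eq hgf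
        rw [h2, fderiv_id]
      have e1 : pC (fderiv ℝ (g ε) (w + (ε:ℂ) * η w)) * (1 + (ε:ℂ) * wdz η w)
          + qC (fderiv ℝ (g ε) (w + (ε:ℂ) * η w))
            * (starRingEnd ℂ) ((ε:ℂ) * wdzbar η w) = 1 := by
        have hp := pC_comp (fderiv ℝ (g ε) (w + (ε:ℂ) * η w))
          (ContinuousLinearMap.id ℝ ℂ + (ε:ℂ) • fderiv ℝ η w)
        rw [hidd, pC_id, hpf w, hqf w] at hp
        exact hp.symm
      have e2 : pC (fderiv ℝ (g ε) (w + (ε:ℂ) * η w)) * ((ε:ℂ) * wdzbar η w)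
          + qC (fderiv ℝ (g ε) (w + (ε:ℂ) * η w))
            * (starRingEnd ℂ) (1 + (ε:ℂ) * wdz η w) = 0 := by
        have hq := qC_comp (fderiv ℝ (g ε) (w + (ε:ℂ) * η w))
          (ContinuousLinearMap.id ℝ ℂ + (ε:ℂ) • fderiv ℝ η w)
        rw [hidd, qC_id, hpf w, hqf w] at hq
        exact hq.symm
      have hJpos : 0 < DD η ε w := hjac' ε hε w hw
      have hJne : DD η ε w ≠ 0 := hJpos.ne'
      have hJcne : ((DD η ε w : ℝ) : ℂ) ≠ 0 := by exact_mod_cast hJne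
      have hJval : DD η ε w = Complex.normSq (1 + (ε:ℂ) * wdz η w)
          - Complex.normSq ((ε:ℂ) * wdzbar η w) := by
        rw [DD, cc, dd, ← normSq_jac]
      have hJc : ((DD η ε w : ℝ) : ℂ)
          = (1 + (ε:ℂ) * wdz η w) * (starRingEnd ℂ) (1 + (ε:ℂ) * wdz η w)
            - ((ε:ℂ) * wdzbar η w) * (starRingEnd ℂ) ((ε:ℂ) * wdzbar η w) := by
        rw [Complex.mul_conj, Complex.mul_conj, hJval]
        push_cast
        ring
      have hPg_eq : pC (fderiv ℝ (g ε) (w + (ε:ℂ) * η w))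
          = (starRingEnd ℂ) (1 + (ε:ℂ) * wdz η w) / ((DD η ε w : ℝ) : ℂ) := by
        rw [eq_div_iff hJcne, hJc]
        linear_combination ((starRingEnd ℂ) (1 + (ε:ℂ) * wdz η w)) * e1
          - ((starRingEnd ℂ) ((ε:ℂ) * wdzbar η w)) * e2
      have hQg_eq : qC (fderiv ℝ (g ε) (w + (ε:ℂ) * η w))
          = -((ε:ℂ) * wdzbar η w) / ((DD η ε w : ℝ) : ℂ) := by
        rw [eq_div_iff hJcne, hJc]
        linear_combination (1 + (ε:ℂ) * wdz η w) * e2 - ((ε:ℂ) * wdzbar η w) * e1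
      have hwdzH : wdz (h ∘ g ε) (w + (ε:ℂ) * η w)
          = (wdz h w * (starRingEnd ℂ) (1 + (ε:ℂ) * wdz η w)
              - wdzbar h w * (starRingEnd ℂ) ((ε:ℂ) * wdzbar η w)) / ((DD η ε w : ℝ) : ℂ) := by
        rw [wdz_eq, hcomp, pC_comp, hPg_eq, hQg_eq, ← wdz_eq, ← wdzbar_eq]
        rw [map_div₀, map_neg, Complex.conj_ofReal]
        ring
      have hwdzbarH : wdzbar (h ∘ g ε) (w + (ε:ℂ) * η w)
          = (wdzbar h w * (1 + (ε:ℂ) * wdz η w)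
              - wdz h w * ((ε:ℂ) * wdzbar η w)) / ((DD η ε w : ℝ) : ℂ) := by
        rw [wdzbar_eq, hcomp, qC_comp, hPg_eq, hQg_eq, ← wdz_eq, ← wdzbar_eq]
        rw [map_div₀, Complex.conj_conj, Complex.conj_ofReal]
        ring
      rw [hdet_eq w, abs_of_pos hJpos, smul_eq_mul, hwdzH, hwdzbarH]
      have hgoal := density_identity (wdz h w) (wdzbar h w) (wdz η w) (wdzbar η w) ε
        (DD η ε w) (by rw [DD, cc, dd]) hJne
      rw [SS, psi, AA, BB, SS]
      exact hgoal
    calc energy Ω (h ∘ g ε)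
        = ∫ z in (fun w => w + (ε:ℂ) * η w) '' Ω,
            (Complex.normSq (wdz (h ∘ g ε) z) + Complex.normSq (wdzbar (h ∘ g ε) z)) := by
          simp only [energy, Complex.sq_norm]
          rw [(hbij ε hε).image_eq]
      _ = ∫ w in Ω, |(ContinuousLinearMap.id ℝ ℂ + (ε:ℂ) • fderiv ℝ η w).det| •
            (Complex.normSq (wdz (h ∘ g ε) (w + (ε:ℂ) * η w))
              + Complex.normSq (wdzbar (h ∘ g ε) (w + (ε:ℂ) * η w))) :=
          integral_image_eq_integral_abs_det_fderiv_smul volume hΩo.measurableSet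
            (fun x _ => (hf'at x).hasFDerivWithinAt) (hbij ε hε).injOn _
      _ = ∫ w in Ω, (SS h w + psi h η ε w) :=
          setIntegral_congr_fun hΩo.measurableSet (fun w hw => hpoint w hw)
      _ = (∫ w in Ω, SS h w) + ∫ w in Ω, psi h η ε w :=
          integral_add hSS_int (hpsi_int ε hε)
  -- uniform bounds on a compact slab
  set δ : ℝ := ε₀ / 2 with hδdef
  have hδpos : 0 < δ := by positivity
  have hδlt : δ < ε₀ := by rw [hδdef]; linarith
  set kset : Set (ℝ × ℂ) := Icc (-δ) δ ×ˢ K with hksetdef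
  have hkc : IsCompact kset := isCompact_Icc.prod hKc
  have hmemΩ : ∀ p : ℝ × ℂ, p ∈ kset → p.2 ∈ Ω := fun p hp => hKΩ hp.2
  have habs : ∀ p : ℝ × ℂ, p ∈ kset → |p.1| < ε₀ := by
    intro p hp
    have h1 := hp.1.1
    have h2 := hp.1.2
    rw [abs_lt]
    constructor <;> linarith
  have hDDne2 : ∀ p : ℝ × ℂ, p ∈ kset → DD η p.1 p.2 ≠ 0 := fun p hp =>
    (hjac' p.1 (habs p hp) p.2 (hmemΩ p hp)).ne'
  have hcA : ContinuousOn (fun p : ℝ × ℂ => AA h η p.2) kset :=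
    hc_AA.comp continuous_snd.continuousOn hmemΩ
  have hcB : ContinuousOn (fun p : ℝ × ℂ => BB h η p.2) kset :=
    hc_BB.comp continuous_snd.continuousOn hmemΩ
  have hcc2 : Continuous (fun p : ℝ × ℂ => cc η p.2) := hcont_cc.comp continuous_snd
  have hcd2 : Continuous (fun p : ℝ × ℂ => dd η p.2) := hcont_dd.comp continuous_snd
  have hcDD2 : Continuous (fun p : ℝ × ℂ => DD η p.1 p.2) := by
    unfold DD
    exact (continuous_const.add (hcc2.mul continuous_fst)).add
      (hcd2.mul (continuous_fst.pow 2))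
  have hcnum : ContinuousOn (fun p : ℝ × ℂ => AA h η p.2 * p.1 + BB h η p.2 * p.1 ^ 2) kset :=
    (hcA.mul continuous_fst.continuousOn).add
      (hcB.mul ((continuous_fst.pow 2).continuousOn))
  have hcl : Continuous (fun p : ℝ × ℂ => cc η p.2 + 2 * dd η p.2 * p.1) :=
    hcc2.add ((continuous_const.mul hcd2).mul continuous_fst)
  have hcp1num : ContinuousOn (fun p : ℝ × ℂ =>
      (AA h η p.2 + 2 * BB h η p.2 * p.1) * DD η p.1 p.2 -
        (AA h η p.2 * p.1 + BB h η p.2 * p.1 ^ 2) * (cc η p.2 + 2 * dd η p.2 * p.1)) kset :=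
    ((hcA.add ((continuousOn_const.mul hcB).mul continuous_fst.continuousOn)).mul
        hcDD2.continuousOn).sub (hcnum.mul hcl.continuousOn)
  have hcP1 : ContinuousOn (fun p : ℝ × ℂ => psi1 h η p.1 p.2) kset := by
    unfold psi1
    exact hcp1num.div ((hcDD2.pow 2).continuousOn)
      (fun p hp => pow_ne_zero 2 (hDDne2 p hp))
  have hcP2 : ContinuousOn (fun p : ℝ × ℂ => psi2 h η p.1 p.2) kset := by
    unfold psi2
    refine ContinuousOn.div ?_ ((hcDD2.pow 3).continuousOn)
      (fun p hp => pow_ne_zero 3 (hDDne2 p hp))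
    exact (((((continuousOn_const.mul hcB).mul hcDD2.continuousOn).sub
        ((continuousOn_const.mul hcd2.continuousOn).mul hcnum)).mul
        hcDD2.continuousOn).sub ((continuousOn_const.mul hcp1num).mul hcl.continuousOn))
  obtain ⟨C1, hC1⟩ := hkc.exists_bound_of_continuousOn hcP1
  obtain ⟨C2, hC2⟩ := hkc.exists_bound_of_continuousOn hcP2
  have hbound1 : ∀ t : ℝ, |t| ≤ δ → ∀ w, ‖psi1 h η t w‖ ≤ K.indicator (fun _ => C1) w := by
    intro t ht w
    by_cases hw : w ∈ K
    · rw [Set.indicator_of_mem hw]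
      exact hC1 (t, w) ⟨mem_Icc.2 (abs_le.1 ht), hw⟩
    · rw [Set.indicator_of_notMem hw, hpsi1_zero t w hw]
      simp
  have hbound2 : ∀ t : ℝ, |t| ≤ δ → ∀ w, ‖psi2 h η t w‖ ≤ K.indicator (fun _ => C2) w := by
    intro t ht w
    by_cases hw : w ∈ K
    · rw [Set.indicator_of_mem hw]
      exact hC2 (t, w) ⟨mem_Icc.2 (abs_le.1 ht), hw⟩
    · rw [Set.indicator_of_notMem hw]
      have hw2 : psi2 h η t w = 0 := by
        obtain ⟨h1, h2, _, _⟩ := hcoef0 w hw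
        simp [psi2, h1, h2]
      rw [hw2]; simp
  have hindint : ∀ C : ℝ, Integrable (K.indicator fun _ => C) (volume.restrict Ω) := by
    intro C
    have hii : Integrable (K.indicator fun _ => C) volume := by
      rw [integrable_indicator_iff hKc.measurableSet]
      exact integrableOn_const hKc.measure_lt_top.ne
    exact hii.restrict
  -- first differentiation under the integral sign
  have hder1 : ∀ ε₁ ∈ Metric.ball (0:ℝ) (δ/2),
      Integrable (psi1 h η ε₁) (volume.restrict Ω) ∧
      HasDerivAt (fun t => ∫ w in Ω, psi h η t w) (∫ w in Ω, psi1 h η ε₁ w) ε₁ := by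
    intro ε₁ hε₁
    have hε₁' : |ε₁| < δ/2 := by rwa [Metric.mem_ball, Real.dist_eq, sub_zero] at hε₁
    have hball : ∀ t ∈ Metric.ball ε₁ (δ/2), |t| ≤ δ ∧ |t| < ε₀ := by
      intro t ht
      have h1 : |t - ε₁| < δ/2 := by rwa [Metric.mem_ball, Real.dist_eq] at ht
      have h3 := abs_sub_abs_le_abs_sub t ε₁
      constructor
      · linarith
      · linarith
    exact hasDerivAt_integral_of_dominated_loc_of_deriv_le
        (Metric.ball_mem_nhds ε₁ (by positivity : (0:ℝ) < δ/2))
      (Filter.Eventually.of_forall fun t => (hm_psi t).aestronglyMeasurable)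
      (hpsi_int ε₁ (by linarith [abs_nonneg ε₁] : |ε₁| < ε₀))
      ((hm_psi1 ε₁).aestronglyMeasurable)
      (ae_of_all _ fun w t ht => hbound1 t (hball t ht).1 w)
      (hindint C1)
      (ae_of_all _ fun w t ht => hasDerivAt_psi h η t w (hDD_ne t (hball t ht).2 w))
  have h0mem : (0:ℝ) ∈ Metric.ball (0:ℝ) (δ/2) := Metric.mem_ball_self (by positivity)
  -- second differentiation under the integral sign
  have hder2 : HasDerivAt (fun t => ∫ w in Ω, psi1 h η t w) (∫ w in Ω, psi2 h η 0 w) 0 := by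
    have hball : ∀ t ∈ Metric.ball (0:ℝ) (δ/2), |t| ≤ δ ∧ |t| < ε₀ := by
      intro t ht
      have h1 : |t| < δ/2 := by rwa [Metric.mem_ball, Real.dist_eq, sub_zero] at ht
      constructor <;> linarith
    exact (hasDerivAt_integral_of_dominated_loc_of_deriv_le
        (Metric.ball_mem_nhds (0:ℝ) (by positivity : (0:ℝ) < δ/2))
      (Filter.Eventually.of_forall fun t => (hm_psi1 t).aestronglyMeasurable)
      ((hder1 0 h0mem).1)
      ((hm_psi2 0).aestronglyMeasurable)
      (ae_of_all _ fun w t ht => hbound2 t (hball t ht).1 w)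
      (hindint C2)
      (ae_of_all _ fun w t ht => hasDerivAt_psi1 h η t w (hDD_ne t (hball t ht).2 w))).2
  -- e agrees with the explicit formula on a ball
  have heball : ∀ t ∈ Metric.ball (0:ℝ) (δ/2),
      e t = (∫ w in Ω, SS h w) + ∫ w in Ω, psi h η t w := by
    intro t ht
    have h1 : |t| < δ/2 := by rwa [Metric.mem_ball, Real.dist_eq, sub_zero] at ht
    rw [he t, heps t (by linarith)]
  have hde : ∀ t ∈ Metric.ball (0:ℝ) (δ/2),
      HasDerivAt e (∫ w in Ω, psi1 h η t w) t := by
    intro t ht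
    refine ((hder1 t ht).2.const_add (∫ w in Ω, SS h w)).congr_of_eventuallyEq ?_
    filter_upwards [Metric.isOpen_ball.mem_nhds ht] with s hs using heball s hs
  have hball0 : Metric.ball (0:ℝ) (δ/2) ∈ nhds (0:ℝ) := Metric.ball_mem_nhds _ (by positivity)
  constructor
  · filter_upwards [hball0] with t ht using (hde t ht).differentiableAt
  · have hding : deriv e =ᶠ[nhds (0:ℝ)] fun t => ∫ w in Ω, psi1 h η t w := by
      filter_upwards [hball0] with t ht using (hde t ht).deriv
    have hfinal := hder2.congr_of_eventuallyEq hding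
    -- integrability for the value computation
    obtain ⟨Mb, hMb⟩ := hKc.exists_bound_of_continuousOn
      ((Complex.continuous_normSq.comp hηwdzbar_c).continuousOn)
    have hMb' : ∀ w, Complex.normSq (wdzbar η w) ≤ max Mb 0 := by
      intro w
      by_cases hw : w ∈ K
      · exact le_trans (le_abs_self _) (le_trans (le_of_eq (Real.norm_eq_abs _).symm)
          ((hMb w hw).trans (le_max_left _ _)))
      · rw [(wdz_zero_of_nmem hw).2]
        simpa using le_max_right Mb 0
    have hSSnn : ∀ w, 0 ≤ SS h w := fun w =>
      add_nonneg (Complex.normSq_nonneg _) (Complex.normSq_nonneg _)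
    have hint1 : IntegrableOn (fun w => SS h w * Complex.normSq (wdzbar η w)) Ω volume := by
      refine Integrable.mono' (hSS_int.const_mul (max Mb 0))
        ((hm_SS.mul ((Complex.continuous_normSq.measurable).comp
          hηwdzbar_c.measurable)).aestronglyMeasurable) (ae_of_all _ ?_)
      intro w
      rw [Real.norm_eq_abs, _root_.abs_of_nonneg (mul_nonneg (hSSnn w) (Complex.normSq_nonneg _))]
      calc SS h w * Complex.normSq (wdzbar η w) ≤ SS h w * max Mb 0 :=
            mul_le_mul_of_nonneg_left (hMb' w) (hSSnn w)
        _ = max Mb 0 * SS h w := mul_comm _ _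
    obtain ⟨Ma, hMa⟩ := hKc.exists_bound_of_continuousOn
      ((hηwdz_c.mul hηwdzbar_c).continuousOn)
    have hMa' : ∀ w, ‖wdz η w * wdzbar η w‖ ≤ max Ma 0 := by
      intro w
      by_cases hw : w ∈ K
      · exact (hMa w hw).trans (le_max_left _ _)
      · rw [(wdz_zero_of_nmem hw).1]
        simpa using le_max_right Ma 0
    have hPQle : ∀ w, ‖wdz h w * (starRingEnd ℂ) (wdzbar h w)‖ ≤ SS h w := by
      intro w
      rw [norm_mul, RCLike.norm_conj]
      have h1 : ‖wdz h w‖ ^ 2 = Complex.normSq (wdz h w) := by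
        rw [← Complex.sq_norm]
      have h2 : ‖wdzbar h w‖ ^ 2 = Complex.normSq (wdzbar h w) := by
        rw [← Complex.sq_norm]
      have h3 : (0:ℝ) ≤ ‖wdz h w‖ := norm_nonneg _
      have h4 : (0:ℝ) ≤ ‖wdzbar h w‖ := norm_nonneg _
      rw [SS]
      nlinarith [sq_nonneg (‖wdz h w‖ - ‖wdzbar h w‖), mul_nonneg h3 h4, h1, h2]
    have hint2 : IntegrableOn
        (fun w => wdz h w * (starRingEnd ℂ) (wdzbar h w) * wdz η w * wdzbar η w) Ω volume := by
      refine Integrable.mono' (hSS_int.const_mul (max Ma 0))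
        (((hm_T.mul hηwdz_c.measurable).mul hηwdzbar_c.measurable).aestronglyMeasurable)
        (ae_of_all _ ?_)
      intro w
      have hx : ‖wdz h w * (starRingEnd ℂ) (wdzbar h w) * wdz η w * wdzbar η w‖
          = ‖wdz h w * (starRingEnd ℂ) (wdzbar h w)‖ * ‖wdz η w * wdzbar η w‖ := by
        rw [← norm_mul]
        congr 1
        ring
      rw [hx]
      calc ‖wdz h w * (starRingEnd ℂ) (wdzbar h w)‖ * ‖wdz η w * wdzbar η w‖
          ≤ SS h w * max Ma 0 := mul_le_mul (hPQle w) (hMa' w) (norm_nonneg _) (hSSnn w)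
        _ = max Ma 0 * SS h w := mul_comm _ _
    -- value of the second derivative
    have hval : (∫ w in Ω, psi2 h η 0 w)
        = 8 * ((1 / 2) * (∫ z in Ω,
            ((norm (wdz h z)) ^ 2 + (norm (wdzbar h z)) ^ 2) *
              (norm (wdzbar η z)) ^ 2)
          + (∫ z in Ω,
              wdz h z * (starRingEnd ℂ) (wdzbar h z) * wdz η z * wdzbar η z).re) := by
      have hfun2 : (fun z => ((norm (wdz h z)) ^ 2 + (norm (wdzbar h z)) ^ 2) *
          (norm (wdzbar η z)) ^ 2)
          = fun w => SS h w * Complex.normSq (wdzbar η w) := by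
        funext z
        rw [SS, Complex.sq_norm, Complex.sq_norm, Complex.sq_norm]
      rw [hfun2]
      have hstep1 : (∫ w in Ω, psi2 h η 0 w)
          = ∫ w in Ω, (4 * (SS h w * Complex.normSq (wdzbar η w)) +
              8 * (wdz h w * (starRingEnd ℂ) (wdzbar h w) * wdz η w * wdzbar η w).re) := by
        congr 1
        funext w
        exact psi2_zero h η w
      rw [hstep1]
      have hint2re : Integrable
          (fun w => (wdz h w * (starRingEnd ℂ) (wdzbar h w) * wdz η w * wdzbar η w).re)
          (volume.restrict Ω) := by
        have hr := hint2.re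
        simpa only [RCLike.re_to_complex] using hr
      rw [integral_add ((hint1.const_mul 4)) ((hint2re.const_mul 8))]
      rw [integral_const_mul, integral_const_mul]
      have hre := integral_re (μ := volume.restrict Ω) hint2
      simp only [RCLike.re_to_complex] at hre
      rw [hre]
      ring
    rw [hval] at hfinal
    exact hfinal
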